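/- If X ⊆ ℕ has positive upper density, then the difference set X - X has positive lower density; more precisely, there exists a finite set T of integers with |T| ≤ 1/d̄(X) such that T + (X - X) = ℤ, so the gaps of X - X are bounded. -/

import Mathlib

open scoped Classical

/-- Upper density of a set of natural numbers. -/
noncomputable def upperDensity (A : Set ℕ) : ℝ :=
  Filter.atTop.limsup fun n => (((Finset.Icc 1 n).filter fun m => m ∈ A).card : ℝ) / n

/-- Lower density of a set of natural numbers. -/
noncomputable def lowerDensity (A : Set ℕ) : ℝ :=
  Filter.atTop.liminf fun n => (((Finset.Icc 1 n).filter fun m => m ∈ A).card : ℝ) / n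

open Filter

private lemma cnt_le (A : Set ℕ) (n : ℕ) :
    ((Finset.Icc 1 n).filter fun m => m ∈ A).card ≤ n := by
  calc ((Finset.Icc 1 n).filter fun m => m ∈ A).card ≤ (Finset.Icc 1 n).card :=
        Finset.card_filter_le _ _
    _ = n := by rw [Nat.card_Icc]; omega

private lemma f_nonneg (A : Set ℕ) (n : ℕ) :
    0 ≤ (((Finset.Icc 1 n).filter fun m => m ∈ A).card : ℝ) / n := by positivity

private lemma f_le_one (A : Set ℕ) (n : ℕ) :
    (((Finset.Icc 1 n).filter fun m => m ∈ A).card : ℝ) / n ≤ 1 := by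
  rcases Nat.eq_zero_or_pos n with rfl | hn
  · simp
  · rw [div_le_one (by exact_mod_cast hn)]
    exact_mod_cast cnt_le A n

private lemma keyB (X : Set ℕ) (S : Finset ℤ)
    (hS : ∀ t ∈ S, ∀ t' ∈ S, t ≠ t' → ¬ ∃ x ∈ X, ∃ x' ∈ X, t - t' = (x : ℤ) - x')
    (M : ℕ) (hM : ∀ t ∈ S, t.natAbs ≤ M) (n : ℕ) :
    S.card * ((Finset.Icc 1 n).filter fun m => m ∈ X).card ≤ n + 2 * M := by
  classical
  set A := (Finset.Icc 1 n).filter (fun m => m ∈ X) with hA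
  have himg : ∀ p ∈ S ×ˢ A, (fun p : ℤ × ℕ => p.1 + (p.2 : ℤ)) p ∈
      Finset.Icc (1 - (M : ℤ)) ((n : ℤ) + M) := by
    rintro ⟨t, m⟩ hp
    rw [Finset.mem_product] at hp
    have h1 := hM t hp.1
    have h2 : m ∈ Finset.Icc 1 n := Finset.mem_of_mem_filter _ hp.2
    rw [Finset.mem_Icc] at h2
    rw [Finset.mem_Icc]
    dsimp only
    omega
  have hinj : Set.InjOn (fun p : ℤ × ℕ => p.1 + (p.2 : ℤ)) ↑(S ×ˢ A) := by
    rintro ⟨t, m⟩ hp ⟨t', m'⟩ hp' heq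
    rw [Finset.mem_coe, Finset.mem_product] at hp hp'
    have hmX : m ∈ X := (Finset.mem_filter.mp hp.2).2
    have hm'X : m' ∈ X := (Finset.mem_filter.mp hp'.2).2
    simp only at heq
    by_cases h : t = t'
    · subst h
      have : m = m' := by omega
      subst this; rfl
    · exact absurd ⟨m', hm'X, m, hmX, by omega⟩ (hS t hp.1 t' hp'.1 h)
  have hcard := Finset.card_le_card_of_injOn _ himg hinj
  rw [Finset.card_product, Int.card_Icc] at hcard
  omega

private lemma card_le_inv (X : Set ℕ) (hX : 0 < upperDensity X) (S : Finset ℤ)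
    (hS : ∀ t ∈ S, ∀ t' ∈ S, t ≠ t' → ¬ ∃ x ∈ X, ∃ x' ∈ X, t - t' = (x : ℤ) - x') :
    (S.card : ℝ) ≤ 1 / upperDensity X := by
  rcases Finset.eq_empty_or_nonempty S with rfl | hne
  · simp only [Finset.card_empty, Nat.cast_zero]
    positivity
  set k := S.card with hk
  have hkpos : 0 < k := Finset.card_pos.mpr hne
  set M := S.sup Int.natAbs with hMdef
  have hM : ∀ t ∈ S, t.natAbs ≤ M := fun t ht => Finset.le_sup ht
  set f := fun n : ℕ => (((Finset.Icc 1 n).filter fun m => m ∈ X).card : ℝ) / n with hf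
  set g := fun n : ℕ => 1 / (k : ℝ) + (2 * M / k) * (1 / (n : ℝ)) with hg
  have htend : Tendsto g atTop (nhds (1 / (k : ℝ))) := by
    have : Tendsto g atTop (nhds (1 / (k : ℝ) + (2 * M / k) * 0)) :=
      tendsto_const_nhds.add (tendsto_const_nhds.mul tendsto_one_div_atTop_nhds_zero_nat)
    simpa using this
  have hfg : f ≤ᶠ[atTop] g := by
    filter_upwards [eventually_ge_atTop 1] with n hn
    have hn0 : (0 : ℝ) < n := by exact_mod_cast hn
    have hkey : (k : ℝ) * (((Finset.Icc 1 n).filter fun m => m ∈ X).card : ℝ) ≤ n + 2 * M := by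
      exact_mod_cast keyB X S hS M hM n
    have hgeq : g n = ((n : ℝ) + 2 * M) / ((k : ℝ) * n) := by
      rw [hg]
      field_simp
    rw [hgeq, hf]
    rw [div_le_div_iff₀ hn0 (by positivity)]
    nlinarith [hkey, hn0.le, Nat.cast_nonneg (α := ℝ) ((Finset.Icc 1 n).filter (fun m => m ∈ X)).card]
  have hb : IsBoundedUnder (· ≥ ·) atTop f := isBoundedUnder_of ⟨0, fun n => f_nonneg X n⟩
  have hbound : IsCoboundedUnder (· ≤ ·) atTop f := hb.isCoboundedUnder_le
  have h1 : upperDensity X ≤ 1 / (k : ℝ) := by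
    have := limsup_le_limsup hfg hbound htend.isBoundedUnder_le
    rw [htend.limsup_eq] at this
    exact this
  rw [le_div_iff₀ hX]
  have hk0 : (0 : ℝ) < (k : ℝ) := by exact_mod_cast hkpos
  have := mul_le_mul_of_nonneg_right h1 hk0.le
  rw [one_div_mul_cancel hk0.ne'] at this
  linarith

theorem difference_set_syndetic (X : Set ℕ) (hX : 0 < upperDensity X) :
    (∃ T : Finset ℤ, (T.card : ℝ) ≤ 1 / upperDensity X ∧
      ∀ z : ℤ, ∃ t ∈ T, ∃ x ∈ X, ∃ x' ∈ X, z = t + ((x : ℤ) - x')) ∧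
    0 < lowerDensity {n : ℕ | ∃ x ∈ X, ∃ x' ∈ X, (n : ℤ) = (x : ℤ) - x'} := by
  classical
  -- X is nonempty
  have hXne : X.Nonempty := by
    by_contra h
    rw [Set.not_nonempty_iff_eq_empty] at h
    subst h
    have h0 : upperDensity (∅ : Set ℕ) = 0 := by
      unfold upperDensity
      simp only [Set.mem_empty_iff_false, Finset.filter_false, Finset.card_empty,
        Nat.cast_zero, zero_div]
      exact limsup_const 0
    rw [h0] at hX
    exact lt_irrefl 0 hX
  -- admissible sets
  set Adm : Finset ℤ → Prop :=
    fun S => ∀ t ∈ S, ∀ t' ∈ S, t ≠ t' → ¬ ∃ x ∈ X, ∃ x' ∈ X, t - t' = (x : ℤ) - x' with hAdm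
  set K := ⌈1 / upperDensity X⌉₊ with hK
  have hcardK : ∀ S, Adm S → S.card ≤ K := by
    intro S hS
    have h1 := card_le_inv X hX S hS
    have h2 : (1 : ℝ) / upperDensity X ≤ (K : ℝ) := Nat.le_ceil _
    exact_mod_cast h1.trans h2
  set P : ℕ → Prop := fun n => ∃ S : Finset ℤ, Adm S ∧ S.card = n with hP
  have hP0 : P 0 := ⟨∅, fun t ht => absurd ht (Finset.notMem_empty t), rfl⟩
  obtain ⟨T, hTadm, hTcard⟩ : P (Nat.findGreatest P K) :=
    Nat.findGreatest_spec (Nat.zero_le K) hP0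
  have hmax : ∀ S, Adm S → S.card ≤ Nat.findGreatest P K := fun S hS =>
    Nat.le_findGreatest (hcardK S hS) ⟨S, hS, rfl⟩
  -- covering property
  have hcover : ∀ z : ℤ, ∃ t ∈ T, ∃ x ∈ X, ∃ x' ∈ X, z = t + ((x : ℤ) - x') := by
    intro z
    by_cases hz : z ∈ T
    · obtain ⟨x, hx⟩ := hXne
      exact ⟨z, hz, x, hx, x, hx, by ring⟩
    · have hnadm : ¬ Adm (insert z T) := by
        intro hadm
        have := hmax _ hadm
        rw [Finset.card_insert_of_notMem hz] at this
        omega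
      simp only [hAdm] at hnadm
      push_neg at hnadm
      obtain ⟨a, ha, b, hb, hab, x, hx, x', hx', heq⟩ := hnadm
      rcases Finset.mem_insert.mp ha with haz | haT
      · subst haz
        rcases Finset.mem_insert.mp hb with hbz | hbT
        · exact absurd hbz.symm hab
        · exact ⟨b, hbT, x, hx, x', hx', by omega⟩
      · rcases Finset.mem_insert.mp hb with hbz | hbT
        · subst hbz
          exact ⟨a, haT, x', hx', x, hx, by omega⟩
        · exact absurd ⟨x, hx, x', hx', heq⟩ (hTadm a haT b hbT hab)
  refine ⟨⟨T, card_le_inv X hX T hTadm, hcover⟩, ?_⟩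
  -- part 2
  set D : Set ℕ := {n : ℕ | ∃ x ∈ X, ∃ x' ∈ X, (n : ℤ) = (x : ℤ) - x'} with hD
  set M := T.sup Int.natAbs with hMdef
  have hM : ∀ t ∈ T, t.natAbs ≤ M := fun t ht => Finset.le_sup ht
  have claim : ∀ j : ℕ, M ≤ j → ∃ m : ℕ, m ∈ D ∧ (j : ℤ) - M ≤ m ∧ (m : ℤ) ≤ j + M := by
    intro j hj
    obtain ⟨t, ht, x, hx, x', hx', heq⟩ := hcover (j : ℤ)
    have htM := hM t ht
    refine ⟨((x : ℤ) - x').toNat, ?_, by omega, by omega⟩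
    rw [hD, Set.mem_setOf_eq]
    exact ⟨x, hx, x', hx', by omega⟩
  have hchoice : ∀ i : ℕ, ∃ m : ℕ, m ∈ D ∧ i * (2 * M + 1) + 1 ≤ m ∧ m ≤ (i + 1) * (2 * M + 1) := by
    intro i
    set c := i * (2 * M + 1) with hc
    obtain ⟨m, hmD, h1, h2⟩ := claim (M + 1 + c) (by omega)
    have hprod : (i + 1) * (2 * M + 1) = c + (2 * M + 1) := by rw [hc]; ring
    exact ⟨m, hmD, by omega, by omega⟩
  choose m hmD hm1 hm2 using hchoice
  have hcount : ∀ n : ℕ, n / (2 * M + 1) ≤ ((Finset.Icc 1 n).filter fun m' => m' ∈ D).card := by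
    intro n
    set q := n / (2 * M + 1) with hq
    have hqn : q * (2 * M + 1) ≤ n := Nat.div_mul_le_self n (2 * M + 1)
    have hmem : ∀ i ∈ Finset.range q, m i ∈ (Finset.Icc 1 n).filter fun m' => m' ∈ D := by
      intro i hi
      rw [Finset.mem_range] at hi
      refine Finset.mem_filter.mpr ⟨Finset.mem_Icc.mpr ⟨?_, ?_⟩, hmD i⟩
      · have := hm1 i; omega
      · have h2 := hm2 i
        have h3 : (i + 1) * (2 * M + 1) ≤ q * (2 * M + 1) := Nat.mul_le_mul_right _ hi
        omega
    have hinj : Set.InjOn m (Finset.range q) := by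
      intro i hi i' hi' h
      have a1 := hm1 i; have a2 := hm2 i; have b1 := hm1 i'; have b2 := hm2 i'
      rcases lt_trichotomy i i' with hlt | heq | hlt
      · have hmul : (i + 1) * (2 * M + 1) ≤ i' * (2 * M + 1) := Nat.mul_le_mul_right _ hlt
        omega
      · exact heq
      · have hmul : (i' + 1) * (2 * M + 1) ≤ i * (2 * M + 1) := Nat.mul_le_mul_right _ hlt
        omega
    calc q = (Finset.range q).card := (Finset.card_range q).symm
      _ ≤ _ := Finset.card_le_card_of_injOn m hmem hinj
  -- density lower bound
  set f2 := fun n : ℕ => (((Finset.Icc 1 n).filter fun m' => m' ∈ D).card : ℝ) / n with hf2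
  set g2 := fun n : ℕ => ((n : ℝ) - 2 * M) / ((2 * M + 1) * (n : ℝ)) with hg2
  have htend2 : Tendsto g2 atTop (nhds (1 / (2 * (M : ℝ) + 1))) := by
    have hbase : Tendsto (fun n : ℕ => 1 / (2 * (M : ℝ) + 1) - (2 * M / (2 * M + 1)) * (1 / (n : ℝ)))
        atTop (nhds (1 / (2 * (M : ℝ) + 1) - (2 * M / (2 * M + 1)) * 0)) :=
      tendsto_const_nhds.sub (tendsto_const_nhds.mul tendsto_one_div_atTop_nhds_zero_nat)
    rw [mul_zero, sub_zero] at hbase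
    refine hbase.congr' ?_
    filter_upwards [eventually_ge_atTop 1] with n hn
    have hn0 : (0 : ℝ) < n := by exact_mod_cast hn
    rw [hg2]
    field_simp
  have hfg2 : ∀ᶠ n in atTop, g2 n ≤ f2 n := by
    filter_upwards [eventually_ge_atTop 1] with n hn
    have hn0 : (0 : ℝ) < n := by exact_mod_cast hn
    have hcnt := hcount n
    set q := n / (2 * M + 1) with hq
    have hqn : n ≤ (2 * M + 1) * q + 2 * M := by
      have h1 := Nat.div_add_mod n (2 * M + 1)
      rw [← hq] at h1
      have h2 : n % (2 * M + 1) < 2 * M + 1 := Nat.mod_lt n (by omega)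
      omega
    have hqR : (n : ℝ) ≤ (2 * M + 1) * q + 2 * M := by exact_mod_cast hqn
    have hcntR : (q : ℝ) ≤ (((Finset.Icc 1 n).filter fun m' => m' ∈ D).card : ℝ) := by
      exact_mod_cast hcnt
    rw [hg2, hf2]
    rw [div_le_div_iff₀ (by positivity) hn0]
    have hMpos : (0 : ℝ) < 2 * (M : ℝ) + 1 := by positivity
    have k1 : (2 * (M : ℝ) + 1) * q ≤ (2 * M + 1) *
        (((Finset.Icc 1 n).filter fun m' => m' ∈ D).card : ℝ) :=
      mul_le_mul_of_nonneg_left hcntR hMpos.le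
    have k2 : ((n : ℝ) - 2 * M) ≤ (2 * M + 1) *
        (((Finset.Icc 1 n).filter fun m' => m' ∈ D).card : ℝ) := by linarith
    have k3 := mul_le_mul_of_nonneg_right k2 hn0.le
    nlinarith [k3]
  have hcb2 : IsCoboundedUnder (· ≥ ·) atTop f2 :=
    (isBoundedUnder_of ⟨1, fun n => f_le_one D n⟩).isCoboundedUnder_ge
  have h2 : 1 / (2 * (M : ℝ) + 1) ≤ liminf f2 atTop := by
    have := liminf_le_liminf hfg2 htend2.isBoundedUnder_ge hcb2
    rw [htend2.liminf_eq] at this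
    exact this
  have hpos : (0 : ℝ) < 1 / (2 * (M : ℝ) + 1) := by positivity
  calc (0 : ℝ) < 1 / (2 * (M : ℝ) + 1) := hpos
    _ ≤ liminf f2 atTop := h2
    _ = lowerDensity D := rfl
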